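/- Monotonicity of cache-oblivious runtime in block size at fixed number of blocks: if T(M,B) counts, for a fixed primitive-operation sequence, the number of operations whose target block (in the partition of the array into size-B blocks) is not among the M/B most recently touched blocks, then for B' ≤ B'' with B' dividing B'' and M'/B' = M''/B'', one has T(M',B') ≥ T(M'',B''). -/

import Mathlib

/-- `hit m past b` : block `b` is among the `m` most recently touched blocks,
    where `past` lists the previously touched blocks, most recent first. -/
def hit (m : ℕ) (past : List ℕ) (b : ℕ) : Bool :=
  past.contains b && decide ((past.takeWhile (fun x => x ≠ b)).dedup.length + 1 ≤ m)

/-- Cost of executing the remaining accesses `seq` (cell addresses), given the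
    list `past` of previously touched blocks (most recent first), with a cache of
    `m` blocks of size `B` each: an access costs `1` iff its block is not among
    the `m` most recently touched blocks. -/
def costAux (m B : ℕ) : List ℕ → List ℕ → ℕ
  | _, [] => 0
  | past, a :: rest =>
      (if hit m past (a / B) then 0 else 1) + costAux m B ((a / B) :: past) rest

/-- `T M B seq` : number of cache misses for the fixed primitive-operation
    sequence `seq` in the ideal-cache (LRU) model with memory `M` and block size
    `B`, starting from an empty memory. -/
def T (M B : ℕ) (seq : List ℕ) : ℕ := costAux (M / B) B [] seq

lemma takeWhile_toFinset_subset (p q : ℕ → Bool) (h : ∀ x, p x → q x) :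
    ∀ l : List ℕ, (l.takeWhile p).toFinset ⊆ (l.takeWhile q).toFinset := by
  intro l; induction l with
  | nil => simp
  | cons a l ih =>
    by_cases hp : p a = true
    · simp [List.takeWhile_cons, hp, h a hp, List.toFinset_cons]
      exact Finset.insert_subset_insert _ ih
    · simp [List.takeWhile_cons, hp]

lemma hit_map (m k : ℕ) (past : List ℕ) (b : ℕ) (h : hit m past b = true) :
    hit m (past.map (· / k)) (b / k) = true := by
  unfold hit at *
  simp only [Bool.and_eq_true, decide_eq_true_eq, List.elem_iff] at *
  obtain ⟨h1, h2⟩ := h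
  refine ⟨List.mem_map_of_mem (f := (· / k)) h1, ?_⟩
  refine le_trans (Nat.add_le_add_right ?_ 1) h2
  have e1 : (past.map (· / k)).takeWhile (fun x => x ≠ b / k)
      = (past.takeWhile (fun x => (x / k : ℕ) ≠ b / k)).map (· / k) := by
    rw [List.takeWhile_map]; rfl
  have e3 : ((past.takeWhile (fun x => (x / k : ℕ) ≠ b / k)).map (· / k)).toFinset
      = (past.takeWhile (fun x => (x / k : ℕ) ≠ b / k)).toFinset.image (· / k) := by
    ext x; simp
  rw [e1, ← List.card_toFinset, ← List.card_toFinset, e3]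
  calc ((past.takeWhile (fun x => (x / k : ℕ) ≠ b / k)).toFinset.image (· / k)).card
      ≤ (past.takeWhile (fun x => (x / k : ℕ) ≠ b / k)).toFinset.card :=
        Finset.card_image_le
    _ ≤ (past.takeWhile (fun x => x ≠ b)).toFinset.card := by
        apply Finset.card_le_card
        apply takeWhile_toFinset_subset
        intro x hx
        simp only [decide_eq_true_eq] at *
        intro hxb; exact hx (by rw [hxb])

lemma cost_le (m B' k : ℕ) :
    ∀ seq past, costAux m (B' * k) (past.map (· / k)) seq ≤ costAux m B' past seq := by
  intro seq
  induction seq with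
  | nil => intro past; simp [costAux]
  | cons a rest ih =>
    intro past
    simp only [costAux]
    have e : a / (B' * k) = a / B' / k := (Nat.div_div_eq_div_mul a B' k).symm
    rw [e]
    have e2 : (a / B' / k) :: past.map (· / k) = ((a / B' :: past)).map (· / k) := rfl
    rw [e2]
    apply Nat.add_le_add _ (ih _)
    by_cases hh : hit m past (a / B') = true
    · simp [hit_map m k past _ hh]
    · split <;> simp

/-- Monotonicity of cache-oblivious runtime in the block size at a fixed number
    of blocks: for `B' ≤ B''` with `B'` dividing `B''` and `M'/B' = M''/B''`,
    one has `T(M', B') ≥ T(M'', B'')`. -/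
theorem cost_mono_block_size (seq : List ℕ) (M' B' M'' B'' : ℕ)
    (hB' : 0 < B') (hle : B' ≤ B'') (hdvd : B' ∣ B'')
    (hm : M' / B' = M'' / B'') :
    T M'' B'' seq ≤ T M' B' seq := by
  obtain ⟨k, rfl⟩ := hdvd
  unfold T
  rw [← hm]
  have := cost_le (M' / B') B' k seq []
  simpa using this
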